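/- For 1 < α < 2, define for k ∈ ℤ the fractional centered difference coefficients g_k^α = (−1)^k Γ(1+α) / (Γ(α/2 − k + 1) Γ(α/2 + k + 1)). Then the family (g_k^α)_{k ∈ ℤ} is summable with sum 0, i.e., HasSum (fun k : ℤ => g_k^α) 0. -/

import Mathlib

/-- The fractional centered difference coefficients
`g_k^α = (−1)^k Γ(1+α) / (Γ(α/2 − k + 1) Γ(α/2 + k + 1))`. -/
noncomputable def gcoef (α : ℝ) (k : ℤ) : ℝ :=
  (-1 : ℝ) ^ k * Real.Gamma (1 + α) /
    (Real.Gamma (α / 2 - (k : ℝ) + 1) * Real.Gamma (α / 2 + (k : ℝ) + 1))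

open Real Filter Finset

theorem stmt_16 (α : ℝ) (hα₁ : 1 < α) (hα₂ : α < 2) :
    HasSum (fun k : ℤ => gcoef α k) 0 := by
  have hπ := Real.pi_pos
  set a : ℝ := α / 2 with ha
  have ha0 : 0 < a := by rw [ha]; linarith
  have ha1 : a < 1 := by rw [ha]; linarith
  have hα0 : (0:ℝ) < α := by linarith
  have hsin : 0 < Real.sin (π * a) :=
    Real.sin_pos_of_pos_of_lt_pi (by positivity) (by nlinarith)
  have hGα : 0 < Real.Gamma (1 + α) := Real.Gamma_pos_of_pos (by linarith)
  set C : ℝ := -(Real.Gamma (1 + α) * Real.sin (π * a) / π) with hC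
  have hCneg : C < 0 := by rw [hC]; have : 0 < Real.Gamma (1 + α) * Real.sin (π * a) / π := by positivity
                           linarith
  set r : ℕ → ℝ := fun m => Real.Gamma ((m:ℝ) - a) / Real.Gamma ((m:ℝ) + a) with hr
  -- symmetry
  have hsym : ∀ k : ℤ, gcoef α (-k) = gcoef α k := by
    intro k
    have h : ((-1 : ℝ)) ^ (-k) = (-1) ^ k := by
      rw [zpow_neg, ← inv_zpow, inv_neg, inv_one]
    rw [gcoef, gcoef]
    push_cast
    rw [h]
    ring_nf
  -- the closed formula for positive indices
  have hform : ∀ n : ℕ, gcoef α ((n : ℤ) + 1) =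
      C * (Real.Gamma (((n:ℝ)+1) - a) / Real.Gamma (((n:ℝ)+1) + 1 + a)) := by
    intro n
    set k : ℝ := (n : ℝ) + 1 with hk
    have hk1 : 1 ≤ k := by rw [hk]; have : (0:ℝ) ≤ n := Nat.cast_nonneg n; linarith
    have hka : 0 < k - a := by linarith
    have hGka : 0 < Real.Gamma (k - a) := Real.Gamma_pos_of_pos hka
    have hGk1a : 0 < Real.Gamma (k + 1 + a) := Real.Gamma_pos_of_pos (by linarith)
    have hrefl : Real.Gamma (k - a) * Real.Gamma (1 - (k - a)) = π / Real.sin (π * (k - a)) :=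
      Real.Gamma_mul_Gamma_one_sub (k - a)
    have hsinval : Real.sin (π * (k - a)) = (-1 : ℝ) ^ n * Real.sin (π * a) := by
      have h : π * (k - a) = (n + 1 : ℕ) * π - π * a := by push_cast [hk]; ring
      rw [h, Real.sin_nat_mul_pi_sub, pow_succ]
      ring
    have hpow : ((-1 : ℝ)) ^ ((n : ℤ) + 1) = (-1 : ℝ) ^ (n + 1) := by
      rw [show ((n : ℤ) + 1) = ((n + 1 : ℕ) : ℤ) by push_cast; ring, zpow_natCast]
    have h1 : (1 : ℝ) - (k - a) = a - k + 1 := by ring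
    rw [hsinval, h1] at hrefl
    rw [gcoef, hC]
    push_cast
    rw [hpow, pow_succ]
    rw [show α / 2 - ((n:ℝ) + 1) + 1 = a - k + 1 by rw [hk, ha]]
    rw [show α / 2 + ((n:ℝ) + 1) + 1 = k + 1 + a by rw [hk, ha]; ring]
    rcases Nat.even_or_odd n with hpar | hpar
    · rw [hpar.neg_one_pow] at hrefl ⊢
      rw [one_mul, eq_div_iff hsin.ne'] at hrefl
      have hGne : Real.Gamma (a - k + 1) = π / (Real.Gamma (k - a) * Real.sin (π * a)) := by
        rw [eq_div_iff (by positivity)]; linarith [hrefl]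
      rw [hGne]
      field_simp
    · rw [hpar.neg_one_pow] at hrefl ⊢
      rw [eq_div_iff (by simp; positivity : (-1 : ℝ) * Real.sin (π * a) ≠ 0)] at hrefl
      have hGne : Real.Gamma (a - k + 1) = -(π / (Real.Gamma (k - a) * Real.sin (π * a))) := by
        rw [eq_comm, neg_eq_iff_eq_neg, eq_comm, eq_div_iff (by positivity)]
        nlinarith [hrefl]
      rw [hGne]
      field_simp
  -- the telescoping form
  have htel : ∀ n : ℕ, Real.Gamma (((n:ℝ)+1) - a) / Real.Gamma (((n:ℝ)+1) + 1 + a) =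
      (1/α) * (r (n+1) - r (n+2)) := by
    intro n
    set k : ℝ := (n : ℝ) + 1 with hk
    have hk1 : 1 ≤ k := by rw [hk]; have : (0:ℝ) ≤ n := Nat.cast_nonneg n; linarith
    have h1 : Real.Gamma ((k - a) + 1) = (k - a) * Real.Gamma (k - a) :=
      Real.Gamma_add_one (by linarith)
    have h2 : Real.Gamma ((k + a) + 1) = (k + a) * Real.Gamma (k + a) :=
      Real.Gamma_add_one (by positivity)
    have hGka : 0 < Real.Gamma (k - a) := Real.Gamma_pos_of_pos (by linarith)
    have hGk2 : 0 < Real.Gamma (k + a) := Real.Gamma_pos_of_pos (by positivity)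
    simp only [hr]
    push_cast
    rw [show (n:ℝ) + 2 - a = (k - a) + 1 by rw [hk]; ring,
      show (n:ℝ) + 2 + a = (k + a) + 1 by rw [hk]; ring,
      show k + 1 + a = (k + a) + 1 by ring, h1, h2]
    rw [show α = 2 * a by rw [ha]; ring]
    field_simp
    ring
  have hgf : ∀ n : ℕ, gcoef α ((n : ℤ) + 1) = (C/α) * (r (n+1) - r (n+2)) := by
    intro n
    rw [hform n, htel n]
    ring
  -- positivity facts about r
  have hrpos : ∀ n : ℕ, 0 < r (n + 1) := by
    intro n
    have hx : (0:ℝ) ≤ n := Nat.cast_nonneg n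
    have h1 : 0 < Real.Gamma (((n+1:ℕ):ℝ) - a) :=
      Real.Gamma_pos_of_pos (by push_cast; linarith)
    have h2 : 0 < Real.Gamma (((n+1:ℕ):ℝ) + a) :=
      Real.Gamma_pos_of_pos (by push_cast; positivity)
    exact div_pos h1 h2
  have hrdiff : ∀ n : ℕ, 0 ≤ r (n+1) - r (n+2) := by
    intro n
    have hx : (0:ℝ) ≤ n := Nat.cast_nonneg n
    have h1 : 0 < Real.Gamma (((n:ℝ)+1) - a) := Real.Gamma_pos_of_pos (by linarith)
    have h2 : 0 < Real.Gamma (((n:ℝ)+1) + 1 + a) := Real.Gamma_pos_of_pos (by positivity)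
    have h3 : r (n+1) - r (n+2)
        = α * (Real.Gamma (((n:ℝ)+1) - a) / Real.Gamma (((n:ℝ)+1) + 1 + a)) := by
      rw [htel n]; field_simp
    rw [h3]
    positivity
  -- limit of r
  have hlim1 : Tendsto (fun n : ℕ => r (n + 1)) atTop (nhds 0) := by
    have hstep : ∀ n : ℕ, r (n + 2) = r (n + 1) * (((n:ℝ)+1-a)/((n:ℝ)+1+a)) := by
      intro n
      have hx : (0:ℝ) ≤ n := Nat.cast_nonneg n
      have h1 : Real.Gamma (((n:ℝ)+1 - a) + 1) = ((n:ℝ)+1 - a) * Real.Gamma ((n:ℝ)+1 - a) :=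
        Real.Gamma_add_one (by linarith)
      have h2 : Real.Gamma (((n:ℝ)+1 + a) + 1) = ((n:ℝ)+1 + a) * Real.Gamma ((n:ℝ)+1 + a) :=
        Real.Gamma_add_one (by positivity)
      have hGka : 0 < Real.Gamma ((n:ℝ)+1 - a) := Real.Gamma_pos_of_pos (by linarith)
      have hGk2 : 0 < Real.Gamma ((n:ℝ)+1 + a) := Real.Gamma_pos_of_pos (by positivity)
      simp only [hr]
      push_cast
      rw [show (n:ℝ) + 2 - a = ((n:ℝ)+1 - a) + 1 by ring,
        show (n:ℝ) + 2 + a = ((n:ℝ)+1 + a) + 1 by ring, h1, h2]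
      field_simp
    have hbound : ∀ n : ℕ,
        r (n + 1) ≤ r 1 * Real.exp (-(2*a) * ∑ i ∈ range n, 1/((i:ℝ)+1+a)) := by
      intro n
      induction n with
      | zero => simp
      | succ n ih =>
        have hx : (0:ℝ) ≤ n := Nat.cast_nonneg n
        have hq : ((n:ℝ)+1-a)/((n:ℝ)+1+a) ≤ Real.exp (-(2*a) * (1/((n:ℝ)+1+a))) := by
          have h1 : (1:ℝ) + (-(2*a) * (1/((n:ℝ)+1+a))) ≤
              Real.exp (-(2*a) * (1/((n:ℝ)+1+a))) := by
            linarith [Real.add_one_le_exp (-(2*a) * (1/((n:ℝ)+1+a)))]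
          have h2 : ((n:ℝ)+1-a)/((n:ℝ)+1+a) = 1 + (-(2*a) * (1/((n:ℝ)+1+a))) := by
            field_simp
            ring
          linarith
        have hqpos : 0 ≤ ((n:ℝ)+1-a)/((n:ℝ)+1+a) := by
          apply div_nonneg <;> linarith
        show r (n + 2) ≤ _
        calc r (n + 2) = r (n + 1) * (((n:ℝ)+1-a)/((n:ℝ)+1+a)) := hstep n
          _ ≤ (r 1 * Real.exp (-(2*a) * ∑ i ∈ range n, 1/((i:ℝ)+1+a))) *
                Real.exp (-(2*a) * (1/((n:ℝ)+1+a))) := by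
              apply mul_le_mul ih hq hqpos
              have : 0 < r 1 := hrpos 0
              positivity
          _ = r 1 * Real.exp (-(2*a) * ∑ i ∈ range (n+1), 1/((i:ℝ)+1+a)) := by
              rw [sum_range_succ, mul_add, Real.exp_add]
              ring
    have hdiv : Tendsto (fun n : ℕ => ∑ i ∈ range n, 1/((i:ℝ)+1+a)) atTop atTop := by
      have hH : Tendsto (fun n : ℕ => ∑ i ∈ range n, 1/((i:ℝ)+1)) atTop atTop :=
        tendsto_sum_range_one_div_nat_succ_atTop
      have hhalf : Tendsto (fun n : ℕ => (1/2) * ∑ i ∈ range n, 1/((i:ℝ)+1)) atTop atTop :=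
        hH.const_mul_atTop (by norm_num)
      apply tendsto_atTop_mono _ hhalf
      intro n
      rw [mul_sum]
      apply sum_le_sum
      intro i _
      have hx : (0:ℝ) ≤ i := Nat.cast_nonneg i
      have he : (1:ℝ)/2 * (1/((i:ℝ)+1)) = 1/(2*((i:ℝ)+1)) := by
        rw [div_mul_div_comm, one_mul]
      rw [he, div_le_div_iff₀ (by positivity) (by positivity)]
      nlinarith
    have hexp : Tendsto (fun n : ℕ => r 1 * Real.exp (-(2*a) * ∑ i ∈ range n, 1/((i:ℝ)+1+a)))
        atTop (nhds 0) := by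
      have h1 : Tendsto (fun n : ℕ => -(2*a) * ∑ i ∈ range n, 1/((i:ℝ)+1+a)) atTop atBot :=
        (tendsto_const_mul_atBot_of_neg (by linarith)).2 hdiv
      have h2 := Real.tendsto_exp_atBot.comp h1
      have := h2.const_mul (r 1)
      simpa using this
    exact squeeze_zero (fun n => (hrpos n).le) hbound hexp
  -- HasSum over the positive indices
  have hs1 : HasSum (fun n : ℕ => gcoef α ((n : ℤ) + 1)) ((C/α) * r 1) := by
    have hG : ∀ n : ℕ, 0 ≤ -gcoef α ((n : ℤ) + 1) := by
      intro n
      rw [hgf n]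
      have := hrdiff n
      nlinarith [div_nonpos_of_nonpos_of_nonneg hCneg.le hα0.le]
    have key : HasSum (fun n : ℕ => -gcoef α ((n : ℤ) + 1)) (-((C/α) * r 1)) := by
      rw [hasSum_iff_tendsto_nat_of_nonneg hG]
      have hsum : ∀ n : ℕ, ∑ i ∈ range n, -gcoef α ((i : ℤ) + 1)
          = (-(C/α)) * (r 1 - r (n+1)) := by
        intro n
        have : ∀ i : ℕ, -gcoef α ((i : ℤ) + 1) = (-(C/α)) * ((fun m => r (m+1)) i - (fun m => r (m+1)) (i+1)) := by
          intro i
          rw [hgf i]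
          ring_nf
        rw [Finset.sum_congr rfl (fun i _ => this i), ← mul_sum,
          Finset.sum_range_sub' (fun m => r (m+1)) n]
      simp only [hsum]
      have : Tendsto (fun n : ℕ => (-(C/α)) * (r 1 - r (n+1))) atTop
          (nhds ((-(C/α)) * (r 1 - 0))) :=
        (tendsto_const_nhds.sub hlim1).const_mul _
      simpa using this
    have := key.neg
    simpa using this
  -- HasSum over nonnegative indices
  have hnat : HasSum (fun n : ℕ => gcoef α (n : ℤ)) ((C/α) * r 1 + gcoef α 0) := by
    have h' : HasSum (fun n : ℕ => gcoef α (((n + 1 : ℕ) : ℤ))) ((C/α) * r 1) := by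
      have he : (fun n : ℕ => gcoef α (((n + 1 : ℕ) : ℤ))) = fun n : ℕ => gcoef α ((n : ℤ) + 1) := by
        funext n; norm_num
      rw [he]
      exact hs1
    have h := (hasSum_nat_add_iff (f := fun n : ℕ => gcoef α (n : ℤ)) 1).mp h'
    simpa using h
  -- HasSum over the negative indices
  have hneg : HasSum (fun n : ℕ => gcoef α (-((n : ℤ) + 1))) ((C/α) * r 1) := by
    have : (fun n : ℕ => gcoef α (-((n : ℤ) + 1))) = fun n : ℕ => gcoef α ((n : ℤ) + 1) := by
      funext n
      exact hsym ((n : ℤ) + 1)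
    rw [this]
    exact hs1
  have htotal := hnat.of_nat_of_neg_add_one hneg
  -- the value of the total sum is 0
  have hval : ((C/α) * r 1 + gcoef α 0) + (C/α) * r 1 = 0 := by
    have hg0 : gcoef α 0 = Real.Gamma (1 + α) / (Real.Gamma (a + 1) * Real.Gamma (a + 1)) := by
      rw [gcoef]
      norm_num
      rw [ha]
    have hr1 : r 1 = Real.Gamma (1 - a) / Real.Gamma (1 + a) := by
      simp only [hr]; norm_num
    have hrefl : Real.Gamma a * Real.Gamma (1 - a) = π / Real.sin (π * a) :=
      Real.Gamma_mul_Gamma_one_sub a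
    have hGa : 0 < Real.Gamma a := Real.Gamma_pos_of_pos ha0
    have hG1a : 0 < Real.Gamma (1 - a) := Real.Gamma_pos_of_pos (by linarith)
    have hGa1 : Real.Gamma (a + 1) = a * Real.Gamma a := Real.Gamma_add_one ha0.ne'
    rw [eq_div_iff hsin.ne'] at hrefl
    have hsineq : Real.sin (π * a) = π / (Real.Gamma a * Real.Gamma (1 - a)) := by
      rw [eq_div_iff (by positivity)]
      linear_combination hrefl
    rw [hg0, hr1, hC, hsineq, hGa1, show (1:ℝ) + a = a + 1 by ring, hGa1,
      show α = 2 * a by rw [ha]; ring]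
    field_simp
    ring
  rw [hval] at htotal
  exact htotal
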